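/- arXiv:2312.14583 — 2 statements merged into one kernel-verified Lean document; each statement's English description precedes it below -/
import Mathlib

section
/- Let R be a random variable on ℕ with P(R = r) = (1 - γ(t+r-1)) ∏_{k=1}^{r-1} γ(t+k-1), where γ is L-periodic with values in (0,1). Then the expected value satisfies E[R] = (L + ∑_{r=1}^{L} r·d(r)) / (∑_{r=1}^{L} d(r)) − L, where d(r) = (1 - γ(t+r-1)) ∏_{k=1}^{r-1} γ(t+k-1). -/
open MeasureTheory
open scoped ENNReal
set_option maxHeartbeats 1000000

lemma aux_iter (L : ℕ) (p : ℝ) (d : ℕ → ℝ)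
    (hstep : ∀ n : ℕ, d (n + 1 + L) = p * d (n + 1)) :
    ∀ (m n : ℕ), d (n + 1 + m * L) = p ^ m * d (n + 1) := by
  intro m
  induction m with
  | zero => simp
  | succ m ih =>
    intro n
    have h1 : n + 1 + (m + 1) * L = (n + m * L) + 1 + L := by ring
    rw [h1, hstep (n + m * L)]
    have h2 : n + m * L + 1 = n + 1 + m * L := by ring
    rw [h2, ih n]
    ring

lemma aux_summable (L : ℕ) (hL : 1 ≤ L) (p : ℝ) (hp0 : 0 < p) (hp1 : p < 1)
    (d : ℕ → ℝ) (hd0 : ∀ n, 0 ≤ d n)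
    (hstep : ∀ n : ℕ, d (n + 1 + L) = p * d (n + 1))
    (hD1 : ∑ i ∈ Finset.range L, d (i + 1) ≤ 1) :
    Summable (fun n : ℕ => ((n : ℝ) + 1) * d (n + 1)) := by
  set b : ℕ → ℝ := fun n => ((n : ℝ) + 1) * d (n + 1) with hb
  have hb0 : ∀ n, 0 ≤ b n := fun n => mul_nonneg (by positivity) (hd0 _)
  have hiter := aux_iter L p d hstep
  -- summable majorant over blocks
  set g : ℕ → ℝ := fun m => ((m : ℝ) + 1) * (L : ℝ) * p ^ m with hg
  have hgs : Summable g := by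
    have h1 : Summable (fun m : ℕ => (m : ℝ) * p ^ m) := by
      have := summable_pow_mul_geometric_of_norm_lt_one (R := ℝ) 1
        (r := p) (by rw [Real.norm_eq_abs, abs_of_pos hp0]; exact hp1)
      simpa using this
    have h2 : Summable (fun m : ℕ => p ^ m) :=
      summable_geometric_of_lt_one hp0.le hp1
    have := (h1.add h2).mul_right (L : ℝ)
    apply this.congr
    intro m
    simp [hg]
    ring
  have hg0 : ∀ m, 0 ≤ g m := fun m => by positivity
  -- block identity and bound
  have hblocksum : ∀ q : ℕ, ∑ i ∈ Finset.range (q * L), b i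
      = ∑ m ∈ Finset.range q, ∑ s ∈ Finset.range L, b (s + m * L) := by
    intro q
    induction q with
    | zero => simp
    | succ q ih =>
      have h1 : (q + 1) * L = q * L + L := by ring
      rw [h1, Finset.sum_range_add, ih, Finset.sum_range_succ]
      congr 1
      apply Finset.sum_congr rfl
      intro s _
      congr 1
      omega
  have hblockle : ∀ m : ℕ, ∑ s ∈ Finset.range L, b (s + m * L) ≤ g m := by
    intro m
    have : ∀ s ∈ Finset.range L, b (s + m * L) ≤ ((m : ℝ) + 1) * (L : ℝ) * (p ^ m * d (s + 1)) := by
      intro s hs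
      simp only [Finset.mem_range] at hs
      have h1 : s + m * L + 1 = s + 1 + m * L := by ring
      have h2 : b (s + m * L) = ((s : ℝ) + (m : ℝ) * L + 1) * (p ^ m * d (s + 1)) := by
        simp only [hb]
        rw [h1, hiter m s]
        push_cast
        ring
      rw [h2]
      apply mul_le_mul_of_nonneg_right _ (mul_nonneg (by positivity) (hd0 _))
      have hsL : (s : ℝ) + 1 ≤ (L : ℝ) := by exact_mod_cast hs
      nlinarith [Nat.cast_nonneg (α := ℝ) m, Nat.cast_nonneg (α := ℝ) L]
    calc ∑ s ∈ Finset.range L, b (s + m * L)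
        ≤ ∑ s ∈ Finset.range L, ((m : ℝ) + 1) * (L : ℝ) * (p ^ m * d (s + 1)) :=
          Finset.sum_le_sum this
      _ = ((m : ℝ) + 1) * (L : ℝ) * p ^ m * ∑ s ∈ Finset.range L, d (s + 1) := by
          rw [Finset.mul_sum]; apply Finset.sum_congr rfl; intros; ring
      _ ≤ g m := by
          have h := mul_le_mul_of_nonneg_left hD1
            (show (0:ℝ) ≤ ((m : ℝ) + 1) * (L : ℝ) * p ^ m by positivity)
          simpa [hg, mul_assoc] using h
  apply summable_of_sum_range_le hb0 (c := ∑' m, g m)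
  intro n
  calc ∑ i ∈ Finset.range n, b i ≤ ∑ i ∈ Finset.range (n * L), b i := by
        apply Finset.sum_le_sum_of_subset_of_nonneg
        · exact Finset.range_subset_range.mpr (Nat.le_mul_of_pos_right n (by omega))
        · intro i _ _; exact hb0 i
    _ = ∑ m ∈ Finset.range n, ∑ s ∈ Finset.range L, b (s + m * L) := hblocksum n
    _ ≤ ∑ m ∈ Finset.range n, g m := Finset.sum_le_sum (fun m _ => hblockle m)
    _ ≤ ∑' m, g m := Summable.sum_le_tsum _ (fun m _ => hg0 m) hgs

lemma aux_tsum (L : ℕ) (hL : 1 ≤ L) (p : ℝ) (hp0 : 0 < p) (hp1 : p < 1)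
    (d : ℕ → ℝ) (hd0 : ∀ n, 0 ≤ d n)
    (hstep : ∀ n : ℕ, d (n + 1 + L) = p * d (n + 1))
    (hDs : Summable (fun n : ℕ => d (n + 1)))
    (hD : ∑' n : ℕ, d (n + 1) = 1) :
    ∑' n : ℕ, ((n : ℝ) + 1) * d (n + 1)
      = ((∑ i ∈ Finset.range L, ((i : ℝ) + 1) * d (i + 1)) + p * L) / (1 - p) := by
  have hD1 : ∑ i ∈ Finset.range L, d (i + 1) ≤ 1 := by
    rw [← hD]
    exact Summable.sum_le_tsum _ (fun m _ => hd0 _) hDs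
  have hb : Summable (fun n : ℕ => ((n : ℝ) + 1) * d (n + 1)) :=
    aux_summable L hL p hp0 hp1 d hd0 hstep hD1
  set b : ℕ → ℝ := fun n => ((n : ℝ) + 1) * d (n + 1) with hbdef
  set T := ∑' n, b n with hT
  have key : (∑ i ∈ Finset.range L, b i) + ∑' i : ℕ, b (i + L) = T :=
    Summable.sum_add_tsum_nat_add L hb
  have hshift : ∀ i : ℕ, b (i + L) = p * b i + (p * L) * d (i + 1) := by
    intro i
    simp only [hbdef]
    have h1 : i + L + 1 = i + 1 + L := by ring
    rw [h1, hstep i]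
    push_cast
    ring
  have htail : ∑' i : ℕ, b (i + L) = p * T + (p * L) * 1 := by
    calc ∑' i : ℕ, b (i + L) = ∑' i : ℕ, (p * b i + (p * L) * d (i + 1)) := by
          exact tsum_congr hshift
      _ = (∑' i : ℕ, p * b i) + ∑' i : ℕ, (p * L) * d (i + 1) :=
          Summable.tsum_add (hb.mul_left p) (hDs.mul_left (p * L))
      _ = p * T + (p * L) * 1 := by rw [tsum_mul_left, tsum_mul_left, hD, hT]
  have h1p : (1 : ℝ) - p ≠ 0 := by linarith
  rw [eq_div_iff h1p]
  have : (∑ i ∈ Finset.range L, b i) + (p * T + (p * L) * 1) = T := by rw [← htail, key]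
  simp only [hbdef] at this ⊢
  linarith

/-- Let R be a random variable on ℕ (the dwell time) with
P(R = r) = (1 - γ(t+r-1)) ∏_{k=1}^{r-1} γ(t+k-1) for r ≥ 1, where γ is an
L-periodic sequence with values in (0,1) and full-cycle product < 1. Then
E[R] = (L + ∑_{r=1}^{L} r·d(r)) / (∑_{r=1}^{L} d(r)) − L,
where d(r) = (1 - γ(t+r-1)) ∏_{k=1}^{r-1} γ(t+k-1)
           = (1 - γ(t+(r-1))) ∏_{k ∈ range (r-1)} γ(t+k). -/
theorem stmt5 {Ω : Type*} [MeasurableSpace Ω] (μ : Measure Ω) [IsProbabilityMeasure μ]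
    (L t : ℕ) (hL : 1 ≤ L) (γ : ℕ → ℝ)
    (hγ : ∀ n, 0 < γ n ∧ γ n < 1)
    (hper : ∀ s, γ (s + L) = γ s)
    (hprod : ∏ j ∈ Finset.range L, γ (1 + j) < 1)
    (R : Ω → ℕ) (hmeas : Measurable R)
    (d : ℕ → ℝ)
    (hd : ∀ r, d r = (1 - γ (t + r - 1)) * ∏ k ∈ Finset.range (r - 1), γ (t + k))
    (hpmf : ∀ r, 1 ≤ r → μ {ω | R ω = r} = ENNReal.ofReal (d r))
    (hzero : μ {ω | R ω = 0} = 0) :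
    ∫ ω, (R ω : ℝ) ∂μ
      = (L + ∑ r ∈ Finset.Icc 1 L, (r : ℝ) * d r) / (∑ r ∈ Finset.Icc 1 L, d r)
          - L := by
  have hγ0 : ∀ n, (0:ℝ) < γ n := fun n => (hγ n).1
  have hγ1 : ∀ n, γ n < 1 := fun n => (hγ n).2
  have hd1 : ∀ n : ℕ, d (n + 1) = (1 - γ (t + n)) * ∏ k ∈ Finset.range n, γ (t + k) := by
    intro n
    rw [hd]
    have h1 : t + (n + 1) - 1 = t + n := by omega
    have h2 : n + 1 - 1 = n := by omega
    rw [h1, h2]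
  set p : ℝ := ∏ k ∈ Finset.range L, γ (t + k) with hpdef
  have hp0 : 0 < p := Finset.prod_pos (fun i _ => hγ0 _)
  have hp1 : p < 1 := by
    obtain ⟨m, rfl⟩ : ∃ m, L = m + 1 := ⟨L - 1, by omega⟩
    rw [hpdef, Finset.prod_range_succ']
    calc (∏ i ∈ Finset.range m, γ (t + (i + 1))) * γ (t + 0)
        ≤ 1 * γ (t + 0) := by
          apply mul_le_mul_of_nonneg_right _ (hγ0 _).le
          exact Finset.prod_le_one (fun i _ => (hγ0 _).le) (fun i _ => (hγ1 _).le)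
      _ < 1 := by rw [one_mul]; exact hγ1 _
  -- shift invariance of full-cycle product
  have hshift1 : ∀ a, ∏ j ∈ Finset.range L, γ (a + 1 + j) = ∏ j ∈ Finset.range L, γ (a + j) := by
    intro a
    have h := (Finset.prod_range_succ (fun j => γ (a + j)) L).symm.trans
      (Finset.prod_range_succ' (fun j => γ (a + j)) L)
    simp only [hper a, add_zero] at h
    have h2 := mul_right_cancel₀ (ne_of_gt (hγ0 a)) h
    rw [h2]
    apply Finset.prod_congr rfl
    intro j _
    congr 1
    omega
  have hshiftm : ∀ m, ∏ j ∈ Finset.range L, γ (t + m + j) = p := by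
    intro m
    induction m with
    | zero => simp [hpdef]
    | succ m ih =>
      rw [← ih, ← hshift1 (t + m)]
      exact Finset.prod_congr rfl fun j _ => congrArg γ (by omega)
  have hstep : ∀ n : ℕ, d (n + 1 + L) = p * d (n + 1) := by
    intro n
    have h1 : n + 1 + L = (n + L) + 1 := by omega
    rw [h1, hd1 (n + L), hd1 n]
    have h2 : γ (t + (n + L)) = γ (t + n) := by
      rw [show t + (n + L) = (t + n) + L by omega, hper]
    have h3 : ∏ x ∈ Finset.range L, γ (t + (n + x)) = p := by
      rw [← hshiftm n]
      exact Finset.prod_congr rfl fun j _ => by rw [add_assoc]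
    rw [h2, Finset.prod_range_add, h3]
    ring
  have hd0 : ∀ r, 0 ≤ d r := by
    intro r
    rw [hd]
    exact mul_nonneg (by linarith [hγ1 (t + r - 1)])
      (Finset.prod_nonneg fun k _ => (hγ0 _).le)
  -- telescoping
  have htel : ∀ n : ℕ, ∑ i ∈ Finset.range n, d (i + 1) = 1 - ∏ k ∈ Finset.range n, γ (t + k) := by
    intro n
    induction n with
    | zero => simp
    | succ n ih =>
      rw [Finset.sum_range_succ, ih, hd1 n, Finset.prod_range_succ]
      ring
  -- conversion Icc 1 L → range L
  have hIcc : ∀ f : ℕ → ℝ, ∑ r ∈ Finset.Icc 1 L, f r = ∑ i ∈ Finset.range L, f (i + 1) := by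
    intro f
    rw [← Finset.Ico_add_one_right_eq_Icc, Finset.sum_Ico_eq_sum_range]
    exact Finset.sum_congr (by norm_num) fun i _ => by rw [add_comm]
  -- total mass
  have hunion : (⋃ n : ℕ, {ω | R ω = n}) = Set.univ := by
    ext ω
    simp only [Set.mem_iUnion, Set.mem_setOf_eq, Set.mem_univ, iff_true]
    exact ⟨R ω, rfl⟩
  have hmeasn : ∀ n : ℕ, MeasurableSet {ω | R ω = n} := fun n =>
    hmeas (measurableSet_singleton n)
  have hdisj : Pairwise (Function.onFun Disjoint fun n : ℕ => {ω | R ω = n}) := by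
    intro i j hij
    simp only [Function.onFun, Set.disjoint_left]
    intro ω h1 h2
    exact hij (h1.symm.trans h2)
  have htot : (1 : ℝ≥0∞) = ∑' n : ℕ, μ {ω | R ω = n} := by
    rw [← measure_univ (μ := μ), ← hunion, measure_iUnion hdisj hmeasn]
  have hsum_ofReal : ∑' n : ℕ, ENNReal.ofReal (d (n + 1)) = 1 := by
    have h1 : ∑' n : ℕ, μ {ω | R ω = n}
        = μ {ω | R ω = 0} + ∑' n : ℕ, μ {ω | R ω = n + 1} :=
      tsum_eq_zero_add' (f := fun n : ℕ => μ {ω | R ω = n}) ENNReal.summable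
    rw [h1, hzero, zero_add] at htot
    rw [htot]
    exact tsum_congr fun n => (hpmf (n + 1) (by omega)).symm
  have hDs : Summable (fun n : ℕ => d (n + 1)) := by
    have h := ENNReal.summable_toReal (f := fun n : ℕ => ENNReal.ofReal (d (n + 1)))
      (by rw [hsum_ofReal]; exact ENNReal.one_ne_top)
    refine h.congr fun n => ?_
    exact ENNReal.toReal_ofReal (hd0 _)
  have hD : ∑' n : ℕ, d (n + 1) = 1 := by
    have h := ENNReal.tsum_toReal_eq (f := fun n : ℕ => ENNReal.ofReal (d (n + 1)))
      (fun n => ENNReal.ofReal_ne_top)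
    rw [hsum_ofReal] at h
    have h2 : ∑' n : ℕ, (ENNReal.ofReal (d (n + 1))).toReal = ∑' n : ℕ, d (n + 1) :=
      tsum_congr fun n => ENNReal.toReal_ofReal (hd0 _)
    rw [h2] at h
    simpa using h.symm
  -- summability of the series of expectations
  have hb : Summable (fun n : ℕ => ((n : ℝ) + 1) * d (n + 1)) :=
    aux_summable L hL p hp0 hp1 d hd0 hstep
      (by rw [← hD]; exact Summable.sum_le_tsum _ (fun m _ => hd0 _) hDs)
  -- the integral as a tsum
  have hint : ∫ ω, (R ω : ℝ) ∂μ = (∑' n : ℕ, (n : ℝ≥0∞) * μ {ω | R ω = n}).toReal := by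
    rw [integral_eq_lintegral_of_nonneg_ae
      (Filter.Eventually.of_forall fun ω => Nat.cast_nonneg _)
      ((measurable_from_top.comp hmeas).aestronglyMeasurable)]
    congr 1
    have h0 : ∀ ω, ENNReal.ofReal ((R ω : ℝ)) = (R ω : ℝ≥0∞) := fun ω =>
      ENNReal.ofReal_natCast _
    simp_rw [h0]
    have hmap : ∫⁻ ω, ((R ω : ℝ≥0∞)) ∂μ = ∫⁻ n, (n : ℝ≥0∞) ∂(μ.map R) :=
      (lintegral_map measurable_from_top hmeas).symm
    rw [hmap, lintegral_countable']
    apply tsum_congr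
    intro n
    rw [Measure.map_apply hmeas (measurableSet_singleton n)]
    rfl
  -- evaluate the ENNReal tsum
  have htsum : (∑' n : ℕ, (n : ℝ≥0∞) * μ {ω | R ω = n})
      = ENNReal.ofReal (∑' n : ℕ, ((n : ℝ) + 1) * d (n + 1)) := by
    rw [tsum_eq_zero_add' (f := fun n : ℕ => (n : ℝ≥0∞) * μ {ω | R ω = n}) ENNReal.summable]
    simp only [Nat.cast_zero, zero_mul, zero_add]
    rw [ENNReal.ofReal_tsum_of_nonneg (fun n => mul_nonneg (by positivity) (hd0 _)) hb]
    apply tsum_congr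
    intro n
    rw [hpmf (n + 1) (by omega), ENNReal.ofReal_mul (by positivity)]
    congr 1
    push_cast
    rw [ENNReal.ofReal_add (by positivity) (by norm_num), ENNReal.ofReal_natCast,
      ENNReal.ofReal_one]
  have hval := aux_tsum L hL p hp0 hp1 d hd0 hstep hDs hD
  rw [hint, htsum, ENNReal.toReal_ofReal
    (tsum_nonneg fun n => mul_nonneg (by positivity) (hd0 _)), hval]
  -- final algebra
  rw [hIcc (fun r => (r : ℝ) * d r), hIcc d, htel L, ← hpdef]
  have hA : ∑ i ∈ Finset.range L, ((i + 1 : ℕ) : ℝ) * d (i + 1)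
      = ∑ i ∈ Finset.range L, ((i : ℝ) + 1) * d (i + 1) := by
    apply Finset.sum_congr rfl
    intros
    push_cast
    ring
  rw [hA]
  have h1p : (1 : ℝ) - p ≠ 0 := by linarith
  field_simp
  ring
end

section
/- The overall dwell-time distribution inherits periodic memorylessness: if d(r) = ∑_{t=1}^{L} w(t) d^{(t)}(r) where each d^{(t)}(r) = (1 - γ(t+r-1)) ∏_{j=1}^{r-1} γ(t+j-1) with γ L-periodic and weights w(t) summing to 1, and R has pmf d, then P(R > L + s | R > L) = P(R > s) for all s ∈ ℕ. -/
open MeasureTheory ProbabilityTheory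

/-- The overall dwell-time distribution inherits periodic
memorylessness: if R has pmf
d(r) = ∑_{t=1}^{L} w(t) (1 - γ(t+r-1)) ∏_{j=1}^{r-1} γ(t+j-1), r ≥ 1,
with γ L-periodic in (0,1), 0 < ∏_{j=1}^{L} γ(j) < 1, and weights w(t) ∈ [0,1]
summing to one, then P(R > L + s | R > L) = P(R > s) for all s ∈ ℕ. -/
theorem stmt11 {Ω : Type*} [MeasurableSpace Ω] (μ : Measure Ω) [IsProbabilityMeasure μ]
    (L : ℕ) (hL : 1 ≤ L) (γ : ℕ → ℝ)
    (hγ : ∀ n, 0 < γ n ∧ γ n < 1)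
    (hper : ∀ u, γ (u + L) = γ u)
    (hprodpos : 0 < ∏ j ∈ Finset.range L, γ (1 + j))
    (hprodlt : ∏ j ∈ Finset.range L, γ (1 + j) < 1)
    (w : ℕ → ℝ) (hw : ∀ t, 0 ≤ w t ∧ w t ≤ 1)
    (hwsum : ∑ t ∈ Finset.Icc 1 L, w t = 1)
    (R : Ω → ℕ) (hmeas : Measurable R)
    (hpmf : ∀ r, 1 ≤ r →
      μ {ω | R ω = r}
        = ENNReal.ofReal (∑ t ∈ Finset.Icc 1 L,
            w t * ((1 - γ (t + r - 1)) * ∏ j ∈ Finset.range (r - 1), γ (t + j))))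
    (hzero : μ {ω | R ω = 0} = 0) :
    ∀ s : ℕ,
      ProbabilityTheory.cond μ {ω | L < R ω} {ω | L + s < R ω}
        = μ {ω | s < R ω} := by
  have hγpos : ∀ n, 0 < γ n := fun n => (hγ n).1
  set P : ℝ := ∏ j ∈ Finset.range L, γ (1 + j) with hPdef
  set T : ℕ → ℝ := fun s => ∑ t ∈ Finset.Icc 1 L, w t * ∏ j ∈ Finset.range s, γ (t + j)
    with hTdef
  have hTnn : ∀ s, 0 ≤ T s := by
    intro s
    apply Finset.sum_nonneg
    intro t _
    exact mul_nonneg (hw t).1 (Finset.prod_nonneg fun j _ => (hγpos _).le)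
  have hT0 : T 0 = 1 := by simp [hTdef, hwsum]
  -- tail formula
  have htail : ∀ s, μ {ω | s < R ω} = ENNReal.ofReal (T s) := by
    intro s
    induction s with
    | zero =>
      have hset : {ω | 0 < R ω} = {ω | R ω = 0}ᶜ := by
        ext ω; simp [Nat.pos_iff_ne_zero]
      have hm0 : MeasurableSet {ω | R ω = 0} := hmeas (measurableSet_singleton 0)
      rw [hset, measure_compl hm0 (measure_ne_top μ _), hzero, hT0]
      simp
    | succ s ih =>
      have hsplit : {ω | s < R ω} = {ω | R ω = s + 1} ∪ {ω | s + 1 < R ω} := by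
        ext ω; simp only [Set.mem_setOf_eq, Set.mem_union]; omega
      have hdisj : Disjoint {ω | R ω = s + 1} {ω | s + 1 < R ω} := by
        rw [Set.disjoint_left]
        intro ω h1 h2
        simp only [Set.mem_setOf_eq] at h1 h2
        omega
      have hm2 : MeasurableSet {ω | s + 1 < R ω} := hmeas measurableSet_Ioi
      rw [hsplit, measure_union hdisj hm2, hpmf (s + 1) (by omega)] at ih
      have hd : (∑ t ∈ Finset.Icc 1 L,
          w t * ((1 - γ (t + (s + 1) - 1)) * ∏ j ∈ Finset.range (s + 1 - 1), γ (t + j)))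
          = ∑ t ∈ Finset.Icc 1 L,
            w t * ((1 - γ (t + s)) * ∏ j ∈ Finset.range s, γ (t + j)) := by
        apply Finset.sum_congr rfl
        intro t _
        congr 2 <;> simp [Nat.add_sub_cancel]
      rw [hd] at ih
      have hdnn : 0 ≤ ∑ t ∈ Finset.Icc 1 L,
          w t * ((1 - γ (t + s)) * ∏ j ∈ Finset.range s, γ (t + j)) := by
        apply Finset.sum_nonneg
        intro t _
        exact mul_nonneg (hw t).1 (mul_nonneg (by linarith [(hγ (t + s)).2])
          (Finset.prod_nonneg fun j _ => (hγpos _).le))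
      have hreal : T s = (∑ t ∈ Finset.Icc 1 L,
          w t * ((1 - γ (t + s)) * ∏ j ∈ Finset.range s, γ (t + j))) + T (s + 1) := by
        simp only [hTdef]
        rw [← Finset.sum_add_distrib]
        apply Finset.sum_congr rfl
        intro t _
        rw [Finset.prod_range_succ]
        ring
      rw [hreal, ENNReal.ofReal_add hdnn (hTnn (s + 1))] at ih
      exact (ENNReal.add_right_inj ENNReal.ofReal_ne_top).mp ih
  -- the full-period product is independent of the phase
  have hstep : ∀ t, ∏ j ∈ Finset.range L, γ (t + 1 + j) = ∏ j ∈ Finset.range L, γ (t + j) := by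
    intro t
    have h1 : (∏ j ∈ Finset.range L, γ (t + 1 + j)) * γ t
        = (∏ j ∈ Finset.range L, γ (t + j)) * γ t := by
      have e1 := Finset.prod_range_succ' (fun j => γ (t + j)) L
      have e2 := Finset.prod_range_succ (fun j => γ (t + j)) L
      have : ∀ j, γ (t + (j + 1)) = γ (t + 1 + j) := by intro j; ring_nf
      rw [e2, hper t] at e1
      calc (∏ j ∈ Finset.range L, γ (t + 1 + j)) * γ t
          = (∏ j ∈ Finset.range L, γ (t + (j + 1))) * γ (t + 0) := by
            simp only [Nat.add_zero]
            congr 1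
            exact Finset.prod_congr rfl fun j _ => by rw [← this j]
        _ = (∏ j ∈ Finset.range L, γ (t + j)) * γ t := e1.symm
    exact mul_right_cancel₀ (hγpos t).ne' h1
  have hQ0 : ∀ t, ∏ j ∈ Finset.range L, γ (t + j) = ∏ j ∈ Finset.range L, γ (0 + j) := by
    intro t
    induction t with
    | zero => rfl
    | succ t ih => rw [← ih]; exact hstep t
  have hQ : ∀ t, ∏ j ∈ Finset.range L, γ (t + j) = P := by
    intro t
    rw [hQ0 t, hPdef, ← hQ0 1]
  -- shift identity
  have hTshift : ∀ s, T (L + s) = P * T s := by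
    intro s
    simp only [hTdef]
    rw [Finset.mul_sum]
    apply Finset.sum_congr rfl
    intro t _
    rw [Finset.prod_range_add]
    have : ∀ j, γ (t + (L + j)) = γ (t + j) := by
      intro j
      have := hper (t + j)
      rw [← this]
      ring_nf
    rw [Finset.prod_congr rfl fun j _ => this j, hQ t]
    ring
  have hTL : T L = P := by
    have := hTshift 0
    simpa [hT0] using this
  have hPpos : 0 < P := hprodpos
  intro s
  have hmL : MeasurableSet {ω | L < R ω} := hmeas measurableSet_Ioi
  rw [ProbabilityTheory.cond_apply hmL]
  have hinter : {ω | L < R ω} ∩ {ω | L + s < R ω} = {ω | L + s < R ω} := by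
    ext ω; simp only [Set.mem_inter_iff, Set.mem_setOf_eq]; omega
  rw [hinter, htail L, htail (L + s), htail s, hTL, hTshift s,
    ENNReal.ofReal_mul hPpos.le, ← mul_assoc,
    ENNReal.inv_mul_cancel (ENNReal.ofReal_pos.mpr hPpos).ne' ENNReal.ofReal_ne_top, one_mul]
end
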